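/- For all n, m ∈ ℕ₀, all graphs G₁ ∈ 𝒢_n, G₂ ∈ 𝒢_m, and every x ∈ ℝ^d, the convolution of the graph integrals satisfies (J_n(G₁,·) ∗ J_m(G₂,·))(x) = J_{n+m+1}(G₁ ⊙ G₂, x), where both sides are interpreted as integrals of nonnegative functions (with values in [0,∞]). -/

import Mathlib

open MeasureTheory Finset
open scoped ENNReal Classical

noncomputable section

/-- The interior vertices `{1,…,n}` of the vertex set `{0,1,…,n+1}` (as `Fin (n+2)`). -/
def interiorVerts (n : ℕ) : Finset (Fin (n + 2)) :=
  Finset.univ.filter fun v => v ≠ 0 ∧ v ≠ Fin.last (n + 1)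

/-- `ConnIn G a b S` : there is a path from `a` to `b` in `G` using only
vertices in `S ∪ {a, b}`. -/
def ConnIn {k : ℕ} (G : SimpleGraph (Fin k)) (a b : Fin k) (S : Set (Fin k)) : Prop :=
  ∃ w : G.Walk a b, ∀ v ∈ w.support, v = a ∨ v = b ∨ v ∈ S

/-- `π_n(G) = Σ_{I ⊆ [n]} (-1)^{n-|I|} 1{0 ↔ n+1 in G|I}`. -/
def piFun (n : ℕ) (G : SimpleGraph (Fin (n + 2))) : ℤ :=
  ∑ I ∈ (interiorVerts n).powerset,
    (-1 : ℤ) ^ (n - I.card) *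
      (if ConnIn G 0 (Fin.last (n + 1)) ↑I then 1 else 0)

/-- The number of edges of `G`, counted via ordered pairs `i < j`. -/
def edgeCount {k : ℕ} (G : SimpleGraph (Fin k)) : ℕ :=
  (Finset.univ.filter fun p : Fin k × Fin k => p.1 < p.2 ∧ G.Adj p.1 p.2).card

/-- `κ_n(H) = Σ_{G ∈ 𝒢_n, E(G) ⊆ E(H)} (-1)^{|E(H)|-|E(G)|} π_n(G)`. -/
def kappaFun (n : ℕ) (H : SimpleGraph (Fin (n + 2))) : ℤ :=
  ∑ G ∈ Finset.univ.filter
      (fun G : SimpleGraph (Fin (n + 2)) => G.Connected ∧ G ≤ H),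
    (-1 : ℤ) ^ (edgeCount H - edgeCount G) * piFun n G

/-- Embedding of the first factor's vertex set into that of the concatenation. -/
def emb1 (n m : ℕ) : Fin (n + 2) → Fin (n + m + 3) :=
  fun i => ⟨i.1, by have := i.isLt; omega⟩

/-- Embedding of the second factor's vertex set into that of the concatenation:
the vertices `0,…,m+1` of `G₂` are relabelled as `n+1,…,n+m+2`. -/
def emb2 (n m : ℕ) : Fin (m + 2) → Fin (n + m + 3) :=
  fun j => ⟨n + 1 + j.1, by have := j.isLt; omega⟩

/-- The concatenation `G₁ ⊙ G₂`: the end-vertex `n+1` of `G₁` is identified with the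
start-vertex of `G₂` and the edge sets are united. -/
def concatG {n m : ℕ} (G₁ : SimpleGraph (Fin (n + 2))) (G₂ : SimpleGraph (Fin (m + 2))) :
    SimpleGraph (Fin (n + m + 3)) :=
  SimpleGraph.fromRel fun u v =>
    (∃ i j, G₁.Adj i j ∧ u = emb1 n m i ∧ v = emb1 n m j) ∨
    (∃ i j, G₂.Adj i j ∧ u = emb2 n m i ∧ v = emb2 n m j)


/-- The point configuration `x₀ = 0`, `x₁,…,x_n = xs`, `x_{n+1} = x`. -/
def pts {d n : ℕ} (x : EuclideanSpace ℝ (Fin d)) (xs : Fin n → EuclideanSpace ℝ (Fin d)) :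
    Fin (n + 2) → EuclideanSpace ℝ (Fin d) :=
  Fin.cons 0 (Fin.snoc xs x)

/-- `∏_{{i,j} ∈ E(G)} φ(y_i - y_j)` as an `ℝ≥0∞`-valued product. -/
def edgeProdL {d k : ℕ} (φ : EuclideanSpace ℝ (Fin d) → ℝ)
    (G : SimpleGraph (Fin k)) (y : Fin k → EuclideanSpace ℝ (Fin d)) : ℝ≥0∞ :=
  ∏ p ∈ Finset.univ.filter (fun p : Fin k × Fin k => p.1 < p.2 ∧ G.Adj p.1 p.2),
    ENNReal.ofReal (φ (y p.1 - y p.2))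

/-- `J_n(G,x) = ∫ ∏_{{i,j} ∈ E(G)} φ(x_i - x_j) d(x₁,…,x_n)` with `x₀ = 0`, `x_{n+1} = x`,
as a `[0,∞]`-valued integral. -/
def JfunL {d : ℕ} (φ : EuclideanSpace ℝ (Fin d) → ℝ) (n : ℕ)
    (G : SimpleGraph (Fin (n + 2))) (x : EuclideanSpace ℝ (Fin d)) : ℝ≥0∞ :=
  ∫⁻ xs : Fin n → EuclideanSpace ℝ (Fin d), edgeProdL φ G (pts x xs)

/-! ### Auxiliary material -/

/-- `cpts u v b` is the configuration with endpoints `u`, `v` and interior `b`. -/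
def cpts {d k : ℕ} (u v : EuclideanSpace ℝ (Fin d)) (b : Fin k → EuclideanSpace ℝ (Fin d)) :
    Fin (k + 2) → EuclideanSpace ℝ (Fin d) :=
  Fin.cons u (Fin.snoc b v)

lemma pts_eq_cpts {d n : ℕ} (x : EuclideanSpace ℝ (Fin d))
    (xs : Fin n → EuclideanSpace ℝ (Fin d)) : pts x xs = cpts 0 x xs := rfl

lemma cpts_apply {d k : ℕ} (u v : EuclideanSpace ℝ (Fin d)) (b : Fin k → EuclideanSpace ℝ (Fin d))
    (i : Fin (k + 2)) :
    cpts u v b i = if h0 : i.1 = 0 then u else if h1 : i.1 = k + 1 then v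
      else b ⟨i.1 - 1, by have := i.isLt; omega⟩ := by
  induction i using Fin.cases with
  | zero => simp [cpts]
  | succ j =>
    rw [cpts, Fin.cons_succ]
    induction j using Fin.lastCases with
    | last => simp
    | cast l =>
      rw [Fin.snoc_castSucc]
      have hl := l.isLt
      rw [dif_neg (by simp), dif_neg (by simp [Fin.val_succ]; omega)]
      congr 1

@[simp] lemma emb1_val {n m : ℕ} (i : Fin (n + 2)) : (emb1 n m i).1 = i.1 := rfl
@[simp] lemma emb2_val {n m : ℕ} (j : Fin (m + 2)) : (emb2 n m j).1 = n + 1 + j.1 := rfl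

lemma emb1_lt_iff {n m : ℕ} {i j : Fin (n + 2)} : emb1 n m i < emb1 n m j ↔ i < j := Iff.rfl

lemma emb2_lt_iff {n m : ℕ} {i j : Fin (m + 2)} : emb2 n m i < emb2 n m j ↔ i < j := by
  rw [Fin.lt_def, Fin.lt_def]
  show n + 1 + i.1 < n + 1 + j.1 ↔ i.1 < j.1
  omega

lemma emb1_inj {n m : ℕ} : Function.Injective (emb1 n m) := by
  intro i j h
  simpa [emb1, Fin.ext_iff] using h

lemma emb2_inj {n m : ℕ} : Function.Injective (emb2 n m) := by
  intro i j h
  simpa [emb2, Fin.ext_iff] using h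

lemma concat_adj {n m : ℕ} {G₁ : SimpleGraph (Fin (n + 2))} {G₂ : SimpleGraph (Fin (m + 2))}
    {u v : Fin (n + m + 3)} :
    (concatG G₁ G₂).Adj u v ↔ u ≠ v ∧
      ((∃ i j, G₁.Adj i j ∧ u = emb1 n m i ∧ v = emb1 n m j) ∨
       (∃ i j, G₂.Adj i j ∧ u = emb2 n m i ∧ v = emb2 n m j)) := by
  rw [concatG, SimpleGraph.fromRel_adj]
  constructor
  · rintro ⟨hne, h | h⟩
    · exact ⟨hne, h⟩
    · refine ⟨hne, ?_⟩
      rcases h with (⟨i, j, hij, hv, hu⟩ | ⟨i, j, hij, hv, hu⟩)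
      · exact Or.inl ⟨j, i, hij.symm, hu, hv⟩
      · exact Or.inr ⟨j, i, hij.symm, hu, hv⟩
  · rintro ⟨hne, h⟩
    exact ⟨hne, Or.inl h⟩

lemma filter_concat_eq {n m : ℕ} (G₁ : SimpleGraph (Fin (n + 2))) (G₂ : SimpleGraph (Fin (m + 2))) :
    (Finset.univ.filter fun p : Fin (n + m + 3) × Fin (n + m + 3) =>
        p.1 < p.2 ∧ (concatG G₁ G₂).Adj p.1 p.2)
    = ((Finset.univ.filter fun q : Fin (n + 2) × Fin (n + 2) => q.1 < q.2 ∧ G₁.Adj q.1 q.2).image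
        fun q => (emb1 n m q.1, emb1 n m q.2))
      ∪ ((Finset.univ.filter fun q : Fin (m + 2) × Fin (m + 2) => q.1 < q.2 ∧ G₂.Adj q.1 q.2).image
        fun q => (emb2 n m q.1, emb2 n m q.2)) := by
  ext p
  simp only [Finset.mem_filter, Finset.mem_union, Finset.mem_image, Finset.mem_univ, true_and]
  constructor
  · rintro ⟨hlt, hadj⟩
    rw [concat_adj] at hadj
    rcases hadj.2 with (⟨i, j, hij, hu, hv⟩ | ⟨i, j, hij, hu, hv⟩)
    · refine Or.inl ⟨(i, j), ⟨?_, hij⟩, ?_⟩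
      · rw [← emb1_lt_iff (m := m), ← hu, ← hv]; exact hlt
      · rw [Prod.ext_iff]; exact ⟨hu.symm, hv.symm⟩
    · refine Or.inr ⟨(i, j), ⟨?_, hij⟩, ?_⟩
      · rw [← emb2_lt_iff (n := n), ← hu, ← hv]; exact hlt
      · rw [Prod.ext_iff]; exact ⟨hu.symm, hv.symm⟩
  · rintro (⟨q, ⟨hlt, hadj⟩, rfl⟩ | ⟨q, ⟨hlt, hadj⟩, rfl⟩)
    · refine ⟨emb1_lt_iff.2 hlt, concat_adj.2 ⟨?_, Or.inl ⟨q.1, q.2, hadj, rfl, rfl⟩⟩⟩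
      exact fun h => hadj.ne (emb1_inj h)
    · refine ⟨emb2_lt_iff.2 hlt, concat_adj.2 ⟨?_, Or.inr ⟨q.1, q.2, hadj, rfl, rfl⟩⟩⟩
      exact fun h => hadj.ne (emb2_inj h)

lemma edgeProdL_concat_eq {d n m : ℕ} (φ : EuclideanSpace ℝ (Fin d) → ℝ)
    (G₁ : SimpleGraph (Fin (n + 2))) (G₂ : SimpleGraph (Fin (m + 2)))
    (z : Fin (n + m + 3) → EuclideanSpace ℝ (Fin d)) :
    edgeProdL φ (concatG G₁ G₂) z
      = edgeProdL φ G₁ (z ∘ emb1 n m) * edgeProdL φ G₂ (z ∘ emb2 n m) := by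
  rw [edgeProdL, filter_concat_eq]
  rw [Finset.prod_union]
  · rw [Finset.prod_image (fun q _ r _ h => ?_), Finset.prod_image (fun q _ r _ h => ?_)]
    · rfl
    · rw [Prod.ext_iff] at h ⊢; exact ⟨emb2_inj h.1, emb2_inj h.2⟩
    · rw [Prod.ext_iff] at h ⊢; exact ⟨emb1_inj h.1, emb1_inj h.2⟩
  · rw [Finset.disjoint_left]
    rintro p hp1 hp2
    simp only [Finset.mem_image, Finset.mem_filter, Finset.mem_univ, true_and] at hp1 hp2
    obtain ⟨q, ⟨hqlt, -⟩, hq⟩ := hp1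
    obtain ⟨r, ⟨hrlt, -⟩, hr⟩ := hp2
    rw [Prod.ext_iff] at hq hr
    have h1 : (emb1 n m q.1).1 = (emb2 n m r.1).1 :=
      congrArg Fin.val (hq.1.trans hr.1.symm)
    have h2 : (emb1 n m q.2).1 = (emb2 n m r.2).1 :=
      congrArg Fin.val (hq.2.trans hr.2.symm)
    have hq1 := q.1.isLt; have hq2 := q.2.isLt
    have hlt' : q.1.1 < q.2.1 := hqlt
    simp only [emb1_val, emb2_val] at h1 h2
    omega

lemma edgeProdL_add_const {d k : ℕ} (φ : EuclideanSpace ℝ (Fin d) → ℝ)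
    (G : SimpleGraph (Fin k)) (z : Fin k → EuclideanSpace ℝ (Fin d))
    (c : EuclideanSpace ℝ (Fin d)) :
    edgeProdL φ G (fun i => z i + c) = edgeProdL φ G z := by
  refine Finset.prod_congr rfl fun p _ => ?_
  rw [add_sub_add_right_eq_sub]

lemma measurable_edgeProdL_comp {α : Type*} [MeasurableSpace α] {d k : ℕ}
    {φ : EuclideanSpace ℝ (Fin d) → ℝ} (hφ : Measurable φ) (G : SimpleGraph (Fin k))
    {w : α → Fin k → EuclideanSpace ℝ (Fin d)} (hw : ∀ i, Measurable fun p => w p i) :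
    Measurable fun p => edgeProdL φ G (w p) := by
  refine Finset.measurable_prod _ fun q _ => ?_
  exact ENNReal.measurable_ofReal.comp (hφ.comp ((hw q.1).sub (hw q.2)))

lemma comp_emb1 {d n m : ℕ} (x : EuclideanSpace ℝ (Fin d))
    (xs : Fin (n + m + 1) → EuclideanSpace ℝ (Fin d)) :
    (pts x xs) ∘ emb1 n m
      = pts (xs ⟨n, by omega⟩) (fun k : Fin n => xs ⟨k.1, by have := k.isLt; omega⟩) := by
  funext i
  have hi := i.isLt
  rw [Function.comp_apply, pts_eq_cpts, pts_eq_cpts, cpts_apply, cpts_apply]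
  have he := emb1_val (m := m) i
  split_ifs with h0 h1 h2 <;>
    first
      | rfl
      | omega
      | · apply congrArg xs
          apply Fin.ext
          simp
          omega

lemma comp_emb2 {d n m : ℕ} (x : EuclideanSpace ℝ (Fin d))
    (xs : Fin (n + m + 1) → EuclideanSpace ℝ (Fin d)) :
    (pts x xs) ∘ emb2 n m
      = cpts (xs ⟨n, by omega⟩) x
          (fun l : Fin m => xs ⟨n + 1 + l.1, by have := l.isLt; omega⟩) := by
  funext j
  have hj := j.isLt
  rw [Function.comp_apply, pts_eq_cpts, cpts_apply, cpts_apply]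
  have he := emb2_val (n := n) j
  split_ifs with h0 h1 h2 h3 <;>
    first
      | rfl
      | omega
      | · apply congrArg xs
          apply Fin.ext
          simp only [emb2_val, Fin.val_mk]
          omega

lemma cpts_shift {d k : ℕ} (y x : EuclideanSpace ℝ (Fin d))
    (b : Fin k → EuclideanSpace ℝ (Fin d)) :
    cpts y x b = fun i => cpts 0 (x - y) (fun l => b l - y) i + y := by
  funext i
  rw [cpts_apply, cpts_apply]
  split_ifs with h0 h1
  · rw [zero_add]
  · rw [sub_add_cancel]
  · rw [sub_add_cancel]

/-- The middle point of a configuration of `n+m+1` interior points. -/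
def midF {d n m : ℕ} (xs : Fin (n + m + 1) → EuclideanSpace ℝ (Fin d)) :
    EuclideanSpace ℝ (Fin d) := xs ⟨n, by omega⟩

/-- The first `n` interior points. -/
def part1 {d n m : ℕ} (xs : Fin (n + m + 1) → EuclideanSpace ℝ (Fin d)) :
    Fin n → EuclideanSpace ℝ (Fin d) :=
  fun k => xs ⟨k.1, by have := k.isLt; omega⟩

/-- The last `m` interior points. -/
def part2 {d n m : ℕ} (xs : Fin (n + m + 1) → EuclideanSpace ℝ (Fin d)) :
    Fin m → EuclideanSpace ℝ (Fin d) :=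
  fun l => xs ⟨n + 1 + l.1, by have := l.isLt; omega⟩

lemma comp_emb1' {d n m : ℕ} (x : EuclideanSpace ℝ (Fin d))
    (xs : Fin (n + m + 1) → EuclideanSpace ℝ (Fin d)) :
    (pts x xs) ∘ emb1 n m = pts (midF xs) (part1 xs) := comp_emb1 x xs

lemma comp_emb2' {d n m : ℕ} (x : EuclideanSpace ℝ (Fin d))
    (xs : Fin (n + m + 1) → EuclideanSpace ℝ (Fin d)) :
    (pts x xs) ∘ emb2 n m = cpts (midF xs) x (part2 xs) := comp_emb2 x xs

/-- The block-splitting measure-preserving map. -/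
def splitT {d n m : ℕ}
    (p : (Fin n → EuclideanSpace ℝ (Fin d)) × (Fin (m + 1) → EuclideanSpace ℝ (Fin d))) :
    Fin (n + m + 1) → EuclideanSpace ℝ (Fin d) :=
  (MeasurableEquiv.piCongrLeft (fun _ : Fin (n + m + 1) => EuclideanSpace ℝ (Fin d))
      (finSumFinEquiv : Fin n ⊕ Fin (m + 1) ≃ Fin (n + m + 1)))
    ((MeasurableEquiv.sumPiEquivProdPi
        (fun _ : Fin n ⊕ Fin (m + 1) => EuclideanSpace ℝ (Fin d))).symm p)

lemma splitT_measurePreserving {d n m : ℕ} :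
    MeasurePreserving (splitT (d := d) (n := n) (m := m)) volume volume :=
  (volume_measurePreserving_piCongrLeft _ _).comp
    (volume_measurePreserving_sumPiEquivProdPi_symm _)

/-- Value of the block-splitting map. -/
lemma splitT_apply {d n m : ℕ} (a : Fin n → EuclideanSpace ℝ (Fin d))
    (c : Fin (m + 1) → EuclideanSpace ℝ (Fin d)) (k : Fin (n + m + 1)) :
    splitT (a, c) k
      = if h : k.1 < n then a ⟨k.1, h⟩ else c ⟨k.1 - n, by have := k.isLt; omega⟩ := by
  rw [splitT, MeasurableEquiv.coe_piCongrLeft, MeasurableEquiv.coe_sumPiEquivProdPi_symm]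
  by_cases h : k.1 < n
  · have hk : k = (finSumFinEquiv : Fin n ⊕ Fin (m + 1) ≃ Fin (n + m + 1)) (Sum.inl ⟨k.1, h⟩) := by
      apply Fin.ext
      rw [finSumFinEquiv_apply_left]
      rfl
    rw [dif_pos h]
    conv_lhs => rw [hk]
    exact Equiv.piCongrLeft_sumInl (fun _ => EuclideanSpace ℝ (Fin d)) _ a c _
  · have hk : k = (finSumFinEquiv : Fin n ⊕ Fin (m + 1) ≃ Fin (n + m + 1))
        (Sum.inr ⟨k.1 - n, by have := k.isLt; omega⟩) := by
      apply Fin.ext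
      rw [finSumFinEquiv_apply_right]
      show k.1 = n + (k.1 - n)
      omega
    rw [dif_neg h]
    conv_lhs => rw [hk]
    exact Equiv.piCongrLeft_sumInr (fun _ => EuclideanSpace ℝ (Fin d)) _ a c _

lemma midF_splitT {d n m : ℕ} (a : Fin n → EuclideanSpace ℝ (Fin d))
    (c : Fin (m + 1) → EuclideanSpace ℝ (Fin d)) :
    midF (splitT (a, c)) = c 0 := by
  rw [midF, splitT_apply, dif_neg (lt_irrefl n)]
  exact congrArg c (Fin.ext (by simp))

lemma part1_splitT {d n m : ℕ} (a : Fin n → EuclideanSpace ℝ (Fin d))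
    (c : Fin (m + 1) → EuclideanSpace ℝ (Fin d)) :
    part1 (splitT (a, c)) = a := by
  funext k
  rw [part1, splitT_apply, dif_pos k.isLt]

lemma part2_splitT {d n m : ℕ} (a : Fin n → EuclideanSpace ℝ (Fin d))
    (c : Fin (m + 1) → EuclideanSpace ℝ (Fin d)) :
    part2 (splitT (a, c)) = fun l => c l.succ := by
  funext l
  have hl := l.isLt
  rw [part2, splitT_apply, dif_neg (show ¬((n : ℕ) + 1 + l.1 < n) by omega)]
  exact congrArg c (Fin.ext (show n + 1 + l.1 - n = l.1 + 1 by omega))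

/-- Splitting off the first coordinate of a `Fin (m+1)`-indexed configuration. -/
lemma lintegral_cons_split {d m : ℕ} (g : (Fin (m + 1) → EuclideanSpace ℝ (Fin d)) → ℝ≥0∞)
    (hg : Measurable g) :
    (∫⁻ c : Fin (m + 1) → EuclideanSpace ℝ (Fin d), g c)
      = ∫⁻ y : EuclideanSpace ℝ (Fin d), ∫⁻ b : Fin m → EuclideanSpace ℝ (Fin d),
          g (Fin.cons y b) := by
  have hMP := MeasurePreserving.symm _
    (volume_preserving_piFinSuccAbove (fun _ : Fin (m + 1) => EuclideanSpace ℝ (Fin d)) 0)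
  rw [← hMP.lintegral_comp hg, Measure.volume_eq_prod,
    lintegral_prod (fun p => g ((MeasurableEquiv.piFinSuccAbove
        (fun _ : Fin (m + 1) => EuclideanSpace ℝ (Fin d)) 0).symm p))
      (hg.comp hMP.measurable).aemeasurable]
  refine lintegral_congr fun y => lintegral_congr fun b => ?_
  simp only [MeasurableEquiv.piFinSuccAbove_symm_apply, Fin.insertNthEquiv,
    Equiv.coe_fn_mk, Fin.insertNth_zero']

set_option maxHeartbeats 2000000 in
theorem JfunL_concat
    {d : ℕ} (hd : 1 ≤ d) (φ : EuclideanSpace ℝ (Fin d) → ℝ)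
    (hφmeas : Measurable φ) (hφrange : ∀ x, φ x ∈ Set.Icc (0 : ℝ) 1)
    (hφsymm : ∀ x, φ (-x) = φ x)
    (hφint : Integrable φ) (hφpos : 0 < ∫ x, φ x)
    (n m : ℕ) (G₁ : SimpleGraph (Fin (n + 2))) (G₂ : SimpleGraph (Fin (m + 2)))
    (hG₁ : G₁.Connected) (hG₂ : G₂.Connected)
    (x : EuclideanSpace ℝ (Fin d)) :
    (∫⁻ y : EuclideanSpace ℝ (Fin d), JfunL φ n G₁ (x - y) * JfunL φ m G₂ y) =
      JfunL φ (n + m + 1) (concatG G₁ G₂) x := by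
  classical
  -- basic measurability facts
  have hP1 : Measurable (fun p : EuclideanSpace ℝ (Fin d) × (Fin n → EuclideanSpace ℝ (Fin d)) =>
      edgeProdL φ G₁ (pts p.1 p.2)) := by
    apply measurable_edgeProdL_comp hφmeas
    intro i
    simp only [pts_eq_cpts, cpts_apply]
    split_ifs
    · exact measurable_const
    · exact measurable_fst
    · exact (measurable_pi_apply _).comp measurable_snd
  have hP2 : Measurable (fun p : EuclideanSpace ℝ (Fin d) × (Fin m → EuclideanSpace ℝ (Fin d)) =>
      edgeProdL φ G₂ (pts p.1 p.2)) := by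
    apply measurable_edgeProdL_comp hφmeas
    intro i
    simp only [pts_eq_cpts, cpts_apply]
    split_ifs
    · exact measurable_const
    · exact measurable_fst
    · exact (measurable_pi_apply _).comp measurable_snd
  have hJ1 : Measurable (JfunL φ n G₁) := by
    unfold JfunL; exact hP1.lintegral_prod_right'
  have hJ2 : Measurable (JfunL φ m G₂) := by
    unfold JfunL; exact hP2.lintegral_prod_right'
  have ha1 : ∀ y : EuclideanSpace ℝ (Fin d),
      Measurable fun a : Fin n → EuclideanSpace ℝ (Fin d) => edgeProdL φ G₁ (pts y a) := by
    intro y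
    apply measurable_edgeProdL_comp hφmeas
    intro i
    simp only [pts_eq_cpts, cpts_apply]
    split_ifs
    · exact measurable_const
    · exact measurable_const
    · exact measurable_pi_apply _
  have hb2 : ∀ y : EuclideanSpace ℝ (Fin d),
      Measurable fun b : Fin m → EuclideanSpace ℝ (Fin d) => edgeProdL φ G₂ (pts y b) := by
    intro y
    apply measurable_edgeProdL_comp hφmeas
    intro i
    simp only [pts_eq_cpts, cpts_apply]
    split_ifs
    · exact measurable_const
    · exact measurable_const
    · exact measurable_pi_apply _
  have hb2' : ∀ y : EuclideanSpace ℝ (Fin d),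
      Measurable fun b : Fin m → EuclideanSpace ℝ (Fin d) => edgeProdL φ G₂ (cpts y x b) := by
    intro y
    apply measurable_edgeProdL_comp hφmeas
    intro i
    simp only [cpts_apply]
    split_ifs
    · exact measurable_const
    · exact measurable_const
    · exact measurable_pi_apply _
  -- the common integrand
  set Q : EuclideanSpace ℝ (Fin d) → (Fin n → EuclideanSpace ℝ (Fin d)) →
      (Fin m → EuclideanSpace ℝ (Fin d)) → ℝ≥0∞ :=
    fun y a b => edgeProdL φ G₁ (pts y a) * edgeProdL φ G₂ (pts (x - y) b) with hQdef
  -- Step 1 : LHS as a triple integral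
  have hsub : MeasurePreserving (fun y : EuclideanSpace ℝ (Fin d) => x - y) volume volume :=
    Measure.measurePreserving_sub_left volume x
  have hH : Measurable fun y => JfunL φ n G₁ (x - y) * JfunL φ m G₂ y :=
    (hJ1.comp (measurable_const.sub measurable_id)).mul hJ2
  have lhs1 : (∫⁻ y, JfunL φ n G₁ (x - y) * JfunL φ m G₂ y)
      = ∫⁻ y, ∫⁻ a, ∫⁻ b, Q y a b := by
    conv_lhs => rw [← hsub.lintegral_comp hH]
    refine lintegral_congr fun y => ?_
    rw [sub_sub_cancel]
    rw [JfunL, JfunL, ← lintegral_mul_const _ (ha1 y)]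
    exact lintegral_congr fun a => (lintegral_const_mul _ (hb2 (x - y))).symm
  -- Step 2 : RHS via the factorization over the two blocks
  set F : (Fin (n + m + 1) → EuclideanSpace ℝ (Fin d)) → ℝ≥0∞ :=
    fun xs => edgeProdL φ G₁ (pts (midF xs) (part1 xs))
      * edgeProdL φ G₂ (cpts (midF xs) x (part2 xs)) with hFdef
  have hF : Measurable F := by
    apply Measurable.mul
    · apply measurable_edgeProdL_comp hφmeas
      intro i
      simp only [pts_eq_cpts, cpts_apply, midF, part1]
      split_ifs
      · exact measurable_const
      · exact measurable_pi_apply _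
      · exact measurable_pi_apply _
    · apply measurable_edgeProdL_comp hφmeas
      intro i
      simp only [cpts_apply, midF, part2]
      split_ifs
      · exact measurable_pi_apply _
      · exact measurable_const
      · exact measurable_pi_apply _
  have rhs1 : JfunL φ (n + m + 1) (concatG G₁ G₂) x
      = ∫⁻ xs : Fin (n + m + 1) → EuclideanSpace ℝ (Fin d), F xs := by
    rw [JfunL]
    refine lintegral_congr fun xs => ?_
    rw [edgeProdL_concat_eq, comp_emb1', comp_emb2']
  -- change variables via the block-splitting map
  have rhs2 : (∫⁻ xs : Fin (n + m + 1) → EuclideanSpace ℝ (Fin d), F xs)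
      = ∫⁻ a : Fin n → EuclideanSpace ℝ (Fin d),
          ∫⁻ c : Fin (m + 1) → EuclideanSpace ℝ (Fin d), F (splitT (a, c)) := by
    rw [← splitT_measurePreserving.lintegral_comp hF, Measure.volume_eq_prod,
      lintegral_prod (fun p => F (splitT p))
        (hF.comp splitT_measurePreserving.measurable).aemeasurable]
  -- split off the middle point and translate the second block
  have rhs3 : ∀ a : Fin n → EuclideanSpace ℝ (Fin d),
      (∫⁻ c : Fin (m + 1) → EuclideanSpace ℝ (Fin d), F (splitT (a, c)))
        = ∫⁻ y, ∫⁻ b, Q y a b := by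
    intro a
    rw [lintegral_cons_split (fun c => F (splitT (a, c))) (hF.comp
      (splitT_measurePreserving.measurable.comp (measurable_const.prodMk measurable_id)))]
    refine lintegral_congr fun y => ?_
    have hcons : ∀ b : Fin m → EuclideanSpace ℝ (Fin d),
        F (splitT (a, Fin.cons y b))
          = edgeProdL φ G₁ (pts y a) * edgeProdL φ G₂ (cpts y x b) := by
      intro b
      rw [hFdef]
      simp only [midF_splitT, part1_splitT, part2_splitT, Fin.cons_zero, Fin.cons_succ]
    rw [lintegral_congr hcons]
    rw [lintegral_const_mul _ (hb2' y)]
    have htrans : (∫⁻ b : Fin m → EuclideanSpace ℝ (Fin d), edgeProdL φ G₂ (cpts y x b))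
        = ∫⁻ b, edgeProdL φ G₂ (pts (x - y) b) := by
      have h1 : ∀ b : Fin m → EuclideanSpace ℝ (Fin d),
          edgeProdL φ G₂ (cpts y x b)
            = edgeProdL φ G₂ (cpts 0 (x - y) (fun l => b l - y)) := by
        intro b
        rw [cpts_shift y x b]
        exact edgeProdL_add_const φ G₂ _ y
      rw [lintegral_congr h1]
      have h2 := lintegral_sub_right_eq_self
        (μ := (volume : Measure (Fin m → EuclideanSpace ℝ (Fin d))))
        (fun b => edgeProdL φ G₂ (cpts 0 (x - y) b)) (fun _ => y)
      refine Eq.trans ?_ (h2.trans ?_)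
      · rfl
      · exact lintegral_congr fun b => by rw [← pts_eq_cpts]
    rw [htrans, ← lintegral_const_mul _ (hb2 (x - y))]
  -- swap the outer two integrals
  have hQm : Measurable (fun r : ((Fin n → EuclideanSpace ℝ (Fin d)) × EuclideanSpace ℝ (Fin d))
      × (Fin m → EuclideanSpace ℝ (Fin d)) => Q r.1.2 r.1.1 r.2) := by
    rw [hQdef]
    apply Measurable.mul
    · apply measurable_edgeProdL_comp hφmeas
      intro i
      simp only [pts_eq_cpts, cpts_apply]
      split_ifs
      · exact measurable_const
      · exact measurable_snd.comp measurable_fst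
      · exact (measurable_pi_apply _).comp (measurable_fst.comp measurable_fst)
    · apply measurable_edgeProdL_comp hφmeas
      intro i
      simp only [pts_eq_cpts, cpts_apply]
      split_ifs
      · exact measurable_const
      · exact measurable_const.sub (measurable_snd.comp measurable_fst)
      · exact (measurable_pi_apply _).comp measurable_snd
  have hswap : (∫⁻ a, ∫⁻ y, ∫⁻ b, Q y a b) = ∫⁻ y, ∫⁻ a, ∫⁻ b, Q y a b :=
    lintegral_lintegral_swap hQm.lintegral_prod_right'.aemeasurable
  rw [lhs1, rhs1, rhs2, lintegral_congr rhs3, hswap]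

end
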